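/- A digraph G=(V,E) has a nowhere-zero p-flow if and only if the flow polynomial f_G^p does not belong to the ideal I_E^p. -/

import Mathlib

open MvPolynomial Finset

/-- The ideal `I_E^p` generated by `1 + x_e + ⋯ + x_e^{p-1}` for each `e ∈ E`. -/
noncomputable def flowIdeal (E : Type) (p : ℕ) : Ideal (MvPolynomial E ℂ) :=
  Ideal.span (Set.range fun e : E => ∑ i ∈ Finset.range p, (X e : MvPolynomial E ℂ) ^ i)

/-- The flow polynomial `f_G^p` of a digraph given by `tl, hd : E → V`. -/
noncomputable def flowPoly {V E : Type} [Fintype V] [Fintype E] [DecidableEq V]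
    (p : ℕ) (tl hd : E → V) : MvPolynomial E ℂ :=
  ∏ v : V, ∑ i ∈ Finset.range p,
    ((∏ e ∈ univ.filter (fun e => hd e = v), (X e : MvPolynomial E ℂ)) *
      ∏ e ∈ univ.filter (fun e => tl e = v), (X e : MvPolynomial E ℂ) ^ (p - 1)) ^ i

/-- `φ` is a `p`-flow: flow conservation mod `p` at every vertex. -/
def IsFlow {V E : Type} [Fintype E] [DecidableEq V] (p : ℕ) (tl hd : E → V)
    (φ : E → ZMod p) : Prop :=
  ∀ v : V, (∑ e ∈ univ.filter (fun e => hd e = v), φ e) =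
    ∑ e ∈ univ.filter (fun e => tl e = v), φ e

namespace FlowAux

/-- The finite set of `p`-th roots of unity different from `1`. -/
noncomputable def S (p : ℕ) : Finset ℂ := (Polynomial.nthRootsFinset p (1 : ℂ)).erase 1

lemma mem_S {p : ℕ} (hp : 2 ≤ p) {s : ℂ} : s ∈ S p ↔ s ^ p = 1 ∧ s ≠ 1 := by
  simp [S, Polynomial.mem_nthRootsFinset (show 0 < p by omega) (1 : ℂ), and_comm]

lemma geom_sum_zero {p : ℕ} (hp : 2 ≤ p) {s : ℂ} (hs : s ∈ S p) :
    ∑ i ∈ Finset.range p, s ^ i = 0 := by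
  obtain ⟨h1, h2⟩ := (mem_S hp).1 hs
  rw [geom_sum_eq h2, h1, sub_self, zero_div]

noncomputable def zeta (p : ℕ) : ℂ := Complex.exp (2 * Real.pi * Complex.I / p)

lemma hzeta {p : ℕ} (hp : 2 ≤ p) : IsPrimitiveRoot (zeta p) p :=
  Complex.isPrimitiveRoot_exp p (by omega)

lemma zeta_mem_S {p : ℕ} (hp : 2 ≤ p) : zeta p ∈ S p :=
  (mem_S hp).2 ⟨(hzeta hp).pow_eq_one, (hzeta hp).ne_one (by omega)⟩

lemma gpoly_eq {p : ℕ} (hp : 2 ≤ p) :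
    (∑ i ∈ Finset.range p, (Polynomial.X : Polynomial ℂ) ^ i)
      = ∏ s ∈ S p, (Polynomial.X - Polynomial.C s) := by
  have h0 : (0:ℕ) < p := by omega
  apply mul_left_cancel₀ (Polynomial.X_sub_C_ne_zero (1 : ℂ))
  have h1 : (Polynomial.X - Polynomial.C (1:ℂ)) *
      ∑ i ∈ Finset.range p, (Polynomial.X : Polynomial ℂ) ^ i
        = Polynomial.X ^ p - 1 := by
    rw [mul_comm]
    simpa using geom_sum_mul (Polynomial.X : Polynomial ℂ) p
  rw [h1, Polynomial.X_pow_sub_one_eq_prod h0 (hzeta hp),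
    ← Finset.mul_prod_erase _ _ (Polynomial.one_mem_nthRootsFinset h0)]
  rfl

/-- Lagrange basis polynomial at node `s`, substituted with variable `X e`. -/
noncomputable def lag (p : ℕ) {E : Type} (e : E) (s : ℂ) : MvPolynomial E ℂ :=
  Polynomial.aeval (X e : MvPolynomial E ℂ) (Lagrange.basis (S p) id s)

lemma sum_lag {p : ℕ} (hp : 2 ≤ p) {E : Type} (e : E) :
    ∑ s ∈ S p, lag p e s = (1 : MvPolynomial E ℂ) := by
  have h := Lagrange.sum_basis (Set.injOn_id _) ⟨zeta p, zeta_mem_S hp⟩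
  have := congrArg (Polynomial.aeval (X e : MvPolynomial E ℂ)) h
  simpa [lag, map_sum] using this

lemma basis_mul {p : ℕ} {s : ℂ} (hs : s ∈ S p) :
    (Polynomial.X - Polynomial.C s) * Lagrange.basis (S p) id s
      = Polynomial.C (∏ j ∈ (S p).erase s, (s - j)⁻¹) *
        ∏ j ∈ S p, (Polynomial.X - Polynomial.C j) := by
  unfold Lagrange.basis Lagrange.basisDivisor
  rw [Finset.prod_mul_distrib, ← map_prod]
  rw [← Finset.mul_prod_erase _ (fun j => Polynomial.X - Polynomial.C j) hs]
  simp only [id_eq]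
  ring

lemma gen_mem {E : Type} (p : ℕ) (e : E) :
    (∑ i ∈ Finset.range p, (X e : MvPolynomial E ℂ) ^ i) ∈ flowIdeal E p :=
  Ideal.subset_span ⟨e, rfl⟩

lemma lag_rel_mem {p : ℕ} (hp : 2 ≤ p) {E : Type} (e : E) {s : ℂ} (hs : s ∈ S p) :
    (X e - C s) * lag p e s ∈ flowIdeal E p := by
  have h := congrArg (Polynomial.aeval (X e : MvPolynomial E ℂ)) (basis_mul hs)
  rw [← gpoly_eq hp] at h
  simp only [map_mul, map_sub, Polynomial.aeval_X, Polynomial.aeval_C, map_sum, map_pow] at h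
  rw [show (algebraMap ℂ (MvPolynomial E ℂ)) s = C s from rfl] at h
  rw [lag]
  rw [h]
  exact Ideal.mul_mem_left _ _ (gen_mem p e)

lemma quot_mul_eps {E : Type} [Fintype E] [DecidableEq E] {p : ℕ} (hp : 2 ≤ p)
    (σ : E → ℂ) (hσ : ∀ e, σ e ∈ S p) (f : MvPolynomial E ℂ) :
    Ideal.Quotient.mk (flowIdeal E p) (f * ∏ e, lag p e (σ e))
      = Ideal.Quotient.mk (flowIdeal E p) (C (eval σ f) * ∏ e, lag p e (σ e)) := by
  set I := flowIdeal E p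
  set ε : MvPolynomial E ℂ := ∏ e, lag p e (σ e) with hε
  induction f using MvPolynomial.induction_on with
  | C a => simp
  | add f g hf hg =>
      rw [add_mul, map_add, hf, hg, ← map_add, ← add_mul, ← C_add, ← eval_add]
  | mul_X f e hf =>
      have key : Ideal.Quotient.mk I (X e * ε) = Ideal.Quotient.mk I (C (σ e) * ε) := by
        rw [Ideal.Quotient.mk_eq_mk_iff_sub_mem, ← sub_mul, hε,
          ← Finset.mul_prod_erase _ _ (Finset.mem_univ e), ← mul_assoc]
        exact Ideal.mul_mem_right _ _ (lag_rel_mem hp e (hσ e))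
      have h1 : f * X e * ε = f * (X e * ε) := by ring
      rw [h1, map_mul, key, ← map_mul]
      have h2 : f * (C (σ e) * ε) = C (σ e) * (f * ε) := by ring
      rw [h2, map_mul, hf, ← map_mul]
      congr 1
      rw [eval_mul, eval_X, C_mul]
      ring

lemma mem_flowIdeal_iff {E : Type} [Fintype E] {p : ℕ} (hp : 2 ≤ p)
    (f : MvPolynomial E ℂ) :
    f ∈ flowIdeal E p ↔ ∀ σ : E → ℂ, (∀ e, σ e ∈ S p) → eval σ f = 0 := by
  classical
  constructor
  · intro hf σ hσ
    have hker : flowIdeal E p ≤ RingHom.ker (eval σ) := by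
      rw [flowIdeal, Ideal.span_le]
      rintro _ ⟨e, rfl⟩
      simp only [SetLike.mem_coe, RingHom.mem_ker, map_sum, map_pow, eval_X]
      exact geom_sum_zero hp (hσ e)
    exact hker hf
  · intro h
    rw [← Ideal.Quotient.eq_zero_iff_mem]
    have h1 : (1 : MvPolynomial E ℂ)
        = ∑ σ ∈ Fintype.piFinset (fun _ : E => S p), ∏ e, lag p e (σ e) := by
      rw [← Finset.prod_univ_sum]
      simp [sum_lag hp]
    calc Ideal.Quotient.mk (flowIdeal E p) f
        = Ideal.Quotient.mk (flowIdeal E p) (f * 1) := by rw [mul_one]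
      _ = 0 := by
          rw [h1, Finset.mul_sum, map_sum]
          apply Finset.sum_eq_zero
          intro σ hσ
          have hσS : ∀ e, σ e ∈ S p := fun e => Fintype.mem_piFinset.mp hσ e
          rw [quot_mul_eps hp σ hσS f, h σ hσS]
          simp

lemma eval_flowPoly_ne_zero_iff {V E : Type} [Fintype V] [Fintype E] [DecidableEq V]
    {p : ℕ} (hp : 2 ≤ p) (tl hd : E → V) (φ : E → ZMod p) :
    eval (fun e => zeta p ^ (φ e).val) (flowPoly p tl hd) ≠ 0 ↔ IsFlow p tl hd φ := by
  haveI : NeZero p := ⟨by omega⟩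
  have hz := hzeta hp
  have hpC : (p : ℂ) ≠ 0 := Nat.cast_ne_zero.mpr (by omega)
  rw [flowPoly, map_prod, Finset.prod_ne_zero_iff]
  have key : ∀ v : V,
      ((eval (fun e => zeta p ^ (φ e).val))
        (∑ i ∈ Finset.range p,
          ((∏ e ∈ univ.filter (fun e => hd e = v), (X e : MvPolynomial E ℂ)) *
            ∏ e ∈ univ.filter (fun e => tl e = v), (X e : MvPolynomial E ℂ) ^ (p - 1)) ^ i) ≠ 0)
      ↔ (∑ e ∈ univ.filter (fun e => hd e = v), φ e)
          = ∑ e ∈ univ.filter (fun e => tl e = v), φ e := by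
    intro v
    set N : ℕ := (∑ e ∈ univ.filter (fun e => hd e = v), (φ e).val)
        + (∑ e ∈ univ.filter (fun e => tl e = v), (φ e).val) * (p - 1) with hN
    have hA : (eval (fun e => zeta p ^ (φ e).val))
        ((∏ e ∈ univ.filter (fun e => hd e = v), (X e : MvPolynomial E ℂ)) *
          ∏ e ∈ univ.filter (fun e => tl e = v), (X e : MvPolynomial E ℂ) ^ (p - 1))
        = zeta p ^ N := by
      simp only [map_mul, map_prod, map_pow, eval_X, ← pow_mul,
        Finset.prod_pow_eq_pow_sum, hN, pow_add, Finset.sum_mul]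
    simp only [map_sum, map_pow, hA]
    have hroot : (zeta p ^ N) ^ p = 1 := by
      rw [← pow_mul, mul_comm, pow_mul, hz.pow_eq_one, one_pow]
    have hNiff : zeta p ^ N = 1 ↔
        (∑ e ∈ univ.filter (fun e => hd e = v), φ e)
          = ∑ e ∈ univ.filter (fun e => tl e = v), φ e := by
      rw [hz.pow_eq_one_iff_dvd, ← ZMod.natCast_eq_zero_iff]
      have hcast : ((N : ℕ) : ZMod p)
          = (∑ e ∈ univ.filter (fun e => hd e = v), φ e)
            - ∑ e ∈ univ.filter (fun e => tl e = v), φ e := by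
        have hp1 : ((p - 1 : ℕ) : ZMod p) = -1 := by
          rw [Nat.cast_sub (by omega : 1 ≤ p), ZMod.natCast_self]
          ring
        rw [hN]
        push_cast
        simp only [ZMod.natCast_val, ZMod.cast_id, hp1]
        ring
      rw [hcast, sub_eq_zero]
    constructor
    · intro hne
      apply hNiff.mp
      by_contra h1
      exact hne (by rw [geom_sum_eq h1, hroot, sub_self, zero_div])
    · intro hflow
      rw [hNiff.mpr hflow]
      simpa using hpC
  unfold IsFlow
  constructor
  · intro h v; exact (key v).mp (h v (mem_univ v))
  · intro h v _; exact (key v).mpr (h v)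

end FlowAux

theorem nowhere_zero_flow_iff_not_mem_ideal {V E : Type} [Fintype V] [Fintype E]
    [DecidableEq V] (p : ℕ) (hp : 2 ≤ p) (tl hd : E → V) :
    (∃ φ : E → ZMod p, (∀ e, φ e ≠ 0) ∧ IsFlow p tl hd φ) ↔
    flowPoly p tl hd ∉ flowIdeal E p := by
  haveI : NeZero p := ⟨by omega⟩
  have hz := FlowAux.hzeta (p := p) hp
  rw [FlowAux.mem_flowIdeal_iff hp]
  push_neg
  constructor
  · rintro ⟨φ, hφ0, hφflow⟩
    refine ⟨fun e => FlowAux.zeta p ^ (φ e).val, fun e => ?_, ?_⟩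
    · refine (FlowAux.mem_S hp).2 ⟨?_, ?_⟩
      · rw [← pow_mul, mul_comm, pow_mul, hz.pow_eq_one, one_pow]
      · exact hz.pow_ne_one_of_pos_of_lt
          (fun h => hφ0 e ((ZMod.val_eq_zero _).1 h)) (ZMod.val_lt _)
    · exact (FlowAux.eval_flowPoly_ne_zero_iff hp tl hd φ).2 hφflow
  · rintro ⟨σ, hσS, hσ⟩
    choose k hk1 hk2 using fun e => hz.eq_pow_of_pow_eq_one ((FlowAux.mem_S hp).1 (hσS e)).1
    refine ⟨fun e => (k e : ZMod p), fun e h => ?_, ?_⟩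
    · have hdvd : p ∣ k e := (ZMod.natCast_eq_zero_iff _ _).1 h
      have hk0 : k e = 0 := Nat.eq_zero_of_dvd_of_lt hdvd (hk1 e)
      exact ((FlowAux.mem_S hp).1 (hσS e)).2 (by rw [← hk2 e, hk0, pow_zero])
    · have hσeq : σ = fun e => FlowAux.zeta p ^ ((k e : ZMod p)).val := by
        funext e; rw [ZMod.val_cast_of_lt (hk1 e), hk2]
      exact (FlowAux.eval_flowPoly_ne_zero_iff hp tl hd _).1 (hσeq ▸ hσ)
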